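/- Let $n \geq 4$ and let $a_2 \leq a_3 \leq \cdots \leq a_n$ be positive reals. Then there exists $\delta_0 > 0$ such that for all $0 < \delta < \delta_0$, defining $l_2 = a_2 - 2\delta$ and $l_k = a_k - l_{k-1}$ for $3 \leq k \leq n-2$, one has $l_k > 0$ for all $2 \leq k \leq n-2$ and $l_{n-2} < a_{n-1}$. -/
import Mathlib

/-- Perturbed nested-circle construction in the case `a₁ = a₂`: for all
sufficiently small `δ > 0`, the lengths `l₂ = a₂ - 2δ`, `l_k = a_k - l_{k-1}`
are positive and `l_{n-2} < a_{n-1}`. -/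
theorem stmt_6 (n : ℕ) (hn : 4 ≤ n) (a : ℕ → ℝ)
    (ha2 : 0 < a 2)
    (hmono : ∀ j, 2 ≤ j → j + 1 ≤ n → a j ≤ a (j + 1)) :
    ∃ δ0 > 0, ∀ δ : ℝ, 0 < δ → δ < δ0 →
      ∀ l : ℕ → ℝ, l 2 = a 2 - 2 * δ →
        (∀ k, 3 ≤ k → k ≤ n - 2 → l k = a k - l (k - 1)) →
        (∀ k, 2 ≤ k → k ≤ n - 2 → 0 < l k) ∧ l (n - 2) < a (n - 1) := by
  refine ⟨a 2 / 2, by linarith, ?_⟩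
  intro δ hδ hδ0 l hl2 hrec
  set c := min (a 2 - 2 * δ) (2 * δ) with hc
  have hcpos : 0 < c := lt_min (by linarith) (by linarith)
  have hcle : c ≤ 2 * δ := min_le_right _ _
  have key : ∀ k, 2 ≤ k → k ≤ n - 2 → c ≤ l k ∧ l k ≤ a k - c := by
    intro k hk
    induction k, hk using Nat.le_induction with
    | base =>
      intro _
      constructor
      · exact hl2 ▸ min_le_left _ _
      · rw [hl2]; linarith
    | succ k hk ih =>
      intro hk2
      have hk1 : k ≤ n - 2 := by omega
      obtain ⟨h1, h2⟩ := ih hk1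
      have hrk : l (k + 1) = a (k + 1) - l k := by
        have := hrec (k + 1) (by omega) hk2
        simpa using this
      have hmk : a k ≤ a (k + 1) := hmono k hk (by omega)
      exact ⟨by linarith, by linarith⟩
  constructor
  · intro k hk hkn
    exact lt_of_lt_of_le hcpos (key k hk hkn).1
  · have h2n : 2 ≤ n - 2 := by omega
    obtain ⟨_, h2⟩ := key (n - 2) h2n le_rfl
    have hm : a (n - 2) ≤ a (n - 2 + 1) := hmono (n - 2) h2n (by omega)
    have hn1 : n - 2 + 1 = n - 1 := by omega
    rw [hn1] at hm
    linarith
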